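/- Let f ∈ ℂ[z] be a polynomial of degree d > 1. Then sup_{z∈ℂ} |(1/2)·log(1+|z|²) − g_f(z)| < ∞; that is, the function z ↦ log(1/[z,∞]) − g_f(z) is bounded on ℂ. -/

import Mathlib

open Polynomial MeasureTheory Filter

/-- The `n`-th iterate of a polynomial `f` (as a polynomial). -/
noncomputable def polyIter (f : Polynomial ℂ) : ℕ → Polynomial ℂ
  | 0 => Polynomial.X
  | n + 1 => f.comp (polyIter f n)

namespace Stmt14Aux

lemma eval_upper (f : Polynomial ℂ) (w : ℂ) :
    ‖f.eval w‖ ≤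
      (∑ i ∈ Finset.range (f.natDegree + 1), ‖f.coeff i‖) *
        (max 1 (‖w‖)) ^ f.natDegree := by
  set m := max 1 (‖w‖) with hm
  have hm1 : (1:ℝ) ≤ m := le_max_left _ _
  have habs : ‖w‖ ≤ m := le_max_right _ _
  rw [Polynomial.eval_eq_sum_range, Finset.sum_mul]
  refine (norm_sum_le _ _).trans (Finset.sum_le_sum fun i hi => ?_)
  rw [norm_mul, norm_pow]
  have h1 : ‖w‖ ^ i ≤ m ^ i := pow_le_pow_left₀ (norm_nonneg w) habs i
  have h2 : m ^ i ≤ m ^ f.natDegree :=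
    pow_le_pow_right₀ hm1 (Nat.lt_succ_iff.mp (Finset.mem_range.mp hi))
  exact mul_le_mul_of_nonneg_left (h1.trans h2) (norm_nonneg _)

lemma eval_lower (f : Polynomial ℂ) (d : ℕ) (hd : 1 < d) (hdeg : f.natDegree = d) :
    ∃ c R : ℝ, 0 < c ∧ 1 ≤ R ∧ ∀ w : ℂ, R ≤ ‖w‖ →
      c * ‖w‖ ^ d ≤ ‖f.eval w‖ := by
  have hf0 : f ≠ 0 := by
    intro h
    rw [h] at hdeg
    simp at hdeg
    omega
  set c0 := ‖f.leadingCoeff‖ with hc0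
  have hc0pos : 0 < c0 := norm_pos_iff.mpr (Polynomial.leadingCoeff_ne_zero.mpr hf0)
  set S := ∑ i ∈ Finset.range d, ‖f.coeff i‖ with hS
  have hSnn : 0 ≤ S := Finset.sum_nonneg fun _ _ => norm_nonneg _
  refine ⟨c0 / 2, max 1 (2 * S / c0), by positivity, le_max_left _ _, fun w hw => ?_⟩
  have hw1 : (1:ℝ) ≤ ‖w‖ := le_trans (le_max_left _ _) hw
  have hw0 : 0 < ‖w‖ := lt_of_lt_of_le one_pos hw1
  have hw2 : 2 * S / c0 ≤ ‖w‖ := le_trans (le_max_right _ _) hw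
  have hw2' : 2 * S ≤ c0 * ‖w‖ := by
    rw [div_le_iff₀ hc0pos] at hw2; linarith
  have heval : f.leadingCoeff * w ^ d =
      f.eval w - ∑ i ∈ Finset.range d, f.coeff i * w ^ i := by
    have h := Polynomial.eval_eq_sum_range (p := f) w
    rw [hdeg] at h
    rw [h, Finset.sum_range_succ]
    rw [← hdeg, Polynomial.coeff_natDegree]
    ring
  have hrest : ‖∑ i ∈ Finset.range d, f.coeff i * w ^ i‖
      ≤ S * ‖w‖ ^ (d - 1) := by
    rw [hS, Finset.sum_mul]
    refine (norm_sum_le _ _).trans (Finset.sum_le_sum fun i hi => ?_)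
    rw [norm_mul, norm_pow]
    refine mul_le_mul_of_nonneg_left ?_ (norm_nonneg _)
    refine pow_le_pow_right₀ hw1 ?_
    have := Finset.mem_range.mp hi
    omega
  have h2 : c0 * ‖w‖ ^ d ≤
      ‖f.eval w‖ + ‖∑ i ∈ Finset.range d, f.coeff i * w ^ i‖ := by
    have : ‖f.leadingCoeff * w ^ d‖ ≤
        ‖f.eval w‖ + ‖∑ i ∈ Finset.range d, f.coeff i * w ^ i‖ := by
      rw [heval, sub_eq_add_neg]
      refine (norm_add_le _ _).trans ?_
      rw [norm_neg]
    rwa [norm_mul, norm_pow] at this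
  have hpow : ‖w‖ ^ d = ‖w‖ ^ (d - 1) * ‖w‖ := by
    rw [← pow_succ]
    congr 1
    omega
  have hAnn : 0 ≤ ‖w‖ ^ (d - 1) := by positivity
  nlinarith [mul_le_mul_of_nonneg_left hw2' hAnn, hrest, h2]

lemma key (f : Polynomial ℂ) (d : ℕ) (hd : 1 < d) (hdeg : f.natDegree = d) :
    ∃ C : ℝ, 0 ≤ C ∧ ∀ w : ℂ,
      |Real.log (max 1 (‖f.eval w‖)) -
        (d : ℝ) * Real.log (max 1 (‖w‖))| ≤ C := by
  obtain ⟨c, R, hc, hR, hlow⟩ := eval_lower f d hd hdeg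
  set A := max 1 (∑ i ∈ Finset.range (d + 1), ‖f.coeff i‖) with hA
  have hA1 : (1:ℝ) ≤ A := le_max_left _ _
  refine ⟨|Real.log A| + |Real.log c| + (d : ℝ) * |Real.log R|, by positivity, fun w => ?_⟩
  set m := max 1 (‖w‖) with hm
  have hm1 : (1:ℝ) ≤ m := le_max_left _ _
  have hm0 : (0:ℝ) < m := one_pos.trans_le hm1
  have hup : Real.log (max 1 (‖f.eval w‖)) ≤ Real.log A + d * Real.log m := by
    have h1 : max 1 (‖f.eval w‖) ≤ A * m ^ d := by
      have hAm : (1:ℝ) ≤ A * m ^ d := by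
        have : (1:ℝ) ≤ m ^ d := by
          calc (1:ℝ) = 1 ^ d := (one_pow d).symm
            _ ≤ m ^ d := pow_le_pow_left₀ zero_le_one hm1 d
        nlinarith
      refine max_le hAm ?_
      have hupev := eval_upper f w
      rw [hdeg] at hupev
      calc ‖f.eval w‖
          ≤ (∑ i ∈ Finset.range (d + 1), ‖f.coeff i‖) * m ^ d := hupev
        _ ≤ A * m ^ d :=
            mul_le_mul_of_nonneg_right (le_max_right _ _) (by positivity)
    calc Real.log (max 1 (‖f.eval w‖))
        ≤ Real.log (A * m ^ d) :=
          Real.log_le_log (lt_of_lt_of_le one_pos (le_max_left _ _)) h1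
      _ = Real.log A + d * Real.log m := by
          rw [Real.log_mul (by positivity) (by positivity), Real.log_pow]
  have hlo : -(|Real.log c| + (d : ℝ) * |Real.log R|)
      ≤ Real.log (max 1 (‖f.eval w‖)) - d * Real.log m := by
    rcases le_or_gt R (‖w‖) with hcase | hcase
    · have hmw : m = ‖w‖ := max_eq_right (hR.trans hcase)
      have h2 : Real.log (c * m ^ d) ≤ Real.log (max 1 (‖f.eval w‖)) := by
        apply Real.log_le_log (by positivity)
        rw [hmw]
        exact (hlow w hcase).trans (le_max_right _ _)
      rw [Real.log_mul (ne_of_gt hc) (by positivity), Real.log_pow] at h2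
      have h3 : -|Real.log c| ≤ Real.log c := neg_abs_le _
      have h4 : (0:ℝ) ≤ (d : ℝ) * |Real.log R| := by positivity
      linarith
    · have hmR : m ≤ R := max_le hR hcase.le
      have h3 : Real.log m ≤ Real.log R := Real.log_le_log hm0 hmR
      have h5 : Real.log R ≤ |Real.log R| := le_abs_self _
      have h4 : 0 ≤ Real.log (max 1 (‖f.eval w‖)) :=
        Real.log_nonneg (le_max_left _ _)
      have h6 : (0:ℝ) ≤ |Real.log c| := abs_nonneg _
      have hd0 : (0:ℝ) ≤ (d : ℝ) := Nat.cast_nonneg d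
      nlinarith [mul_le_mul_of_nonneg_left (h3.trans h5) hd0]
  rw [abs_le]
  have h10 : (0:ℝ) ≤ |Real.log A| := abs_nonneg _
  constructor
  · linarith
  · have h7 : Real.log A ≤ |Real.log A| := le_abs_self _
    have h8 : (0:ℝ) ≤ |Real.log c| := abs_nonneg _
    have h9 : (0:ℝ) ≤ (d : ℝ) * |Real.log R| := by positivity
    linarith

lemma chordal (z : ℂ) :
    |(1 / 2 : ℝ) * Real.log (1 + ‖z‖ ^ 2) - Real.log (max 1 (‖z‖))|
      ≤ (1 / 2) * Real.log 2 := by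
  set a := ‖z‖ with ha
  have ha0 : 0 ≤ a := norm_nonneg z
  set m := max 1 a with hm
  have hm1 : (1:ℝ) ≤ m := le_max_left _ _
  have hm0 : (0:ℝ) < m := one_pos.trans_le hm1
  have hlogm : Real.log m = (1/2) * Real.log (m ^ 2) := by
    rw [Real.log_pow]
    push_cast
    ring
  have hle1 : m ^ 2 ≤ 1 + a ^ 2 := by
    rcases le_or_gt a 1 with h | h
    · have : m = 1 := max_eq_left h
      rw [this]; nlinarith
    · have : m = a := max_eq_right h.le
      rw [this]; nlinarith
  have hle2 : 1 + a ^ 2 ≤ 2 * m ^ 2 := by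
    have h1 : (1:ℝ) ≤ m ^ 2 := by nlinarith
    have h2 : a ^ 2 ≤ m ^ 2 := by
      have : a ≤ m := le_max_right _ _
      nlinarith
    linarith
  have hl1 : Real.log (m ^ 2) ≤ Real.log (1 + a ^ 2) :=
    Real.log_le_log (by positivity) hle1
  have hl2 : Real.log (1 + a ^ 2) ≤ Real.log 2 + Real.log (m ^ 2) := by
    have := Real.log_le_log (by positivity : (0:ℝ) < 1 + a ^ 2) hle2
    rwa [Real.log_mul (by norm_num) (by positivity)] at this
  rw [hlogm, abs_le]
  constructor <;> linarith

end Stmt14Aux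

theorem stmt14 (f : Polynomial ℂ) (d : ℕ) (hd : 1 < d) (hdeg : f.natDegree = d)
    (g : ℂ → ℝ)
    (hg : ∀ z : ℂ, Tendsto
      (fun n : ℕ => Real.log (max 1 (‖(polyIter f n).eval z‖)) / (d : ℝ) ^ n)
      atTop (nhds (g z))) :
    ∃ M : ℝ, ∀ z : ℂ, |(1 / 2) * Real.log (1 + ‖z‖ ^ 2) - g z| ≤ M := by
  obtain ⟨C, hC, hkey⟩ := Stmt14Aux.key f d hd hdeg
  have hd1 : (1:ℝ) < (d : ℝ) := by exact_mod_cast hd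
  have hdpos : (0:ℝ) < (d : ℝ) := by linarith
  refine ⟨C / ((d : ℝ) - 1) + (1 / 2) * Real.log 2, fun z => ?_⟩
  set u : ℕ → ℝ := fun n =>
    Real.log (max 1 (‖(polyIter f n).eval z‖)) / (d : ℝ) ^ n with hu
  have hu0 : u 0 = Real.log (max 1 (‖z‖)) := by
    simp [hu, polyIter]
  have hind : ∀ n : ℕ, |u n - u 0| ≤ C / ((d : ℝ) - 1) * (1 - (((d : ℝ) ^ n)⁻¹)) := by
    intro n
    induction n with
    | zero => simp
    | succ n ih =>
      have hpne : ((d : ℝ)) ^ (n + 1) ≠ 0 := by positivity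
      have hstep : |u (n + 1) - u n| ≤ C / (d : ℝ) ^ (n + 1) := by
        have hw := hkey ((polyIter f n).eval z)
        have heq : u (n + 1) - u n =
            (Real.log (max 1 (‖f.eval ((polyIter f n).eval z)‖)) -
              (d : ℝ) * Real.log (max 1 (‖(polyIter f n).eval z‖))) /
              (d : ℝ) ^ (n + 1) := by
          show Real.log (max 1 (‖(polyIter f (n+1)).eval z‖)) / (d : ℝ) ^ (n+1)
              - Real.log (max 1 (‖(polyIter f n).eval z‖)) / (d : ℝ) ^ n = _
          have : (polyIter f (n+1)).eval z = f.eval ((polyIter f n).eval z) := by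
            show (f.comp (polyIter f n)).eval z = _
            rw [Polynomial.eval_comp]
          rw [this]
          field_simp
          ring
        rw [heq, abs_div, abs_of_pos (by positivity : (0:ℝ) < (d : ℝ) ^ (n + 1))]
        exact div_le_div_of_nonneg_right hw (by positivity) |>.trans_eq rfl
      have hgeo : C / ((d : ℝ) - 1) * (1 - (((d : ℝ) ^ n)⁻¹)) + C / (d : ℝ) ^ (n + 1)
          = C / ((d : ℝ) - 1) * (1 - (((d : ℝ) ^ (n + 1))⁻¹)) := by
        have h1 : (d : ℝ) - 1 ≠ 0 := by linarith
        have h2 : ((d : ℝ)) ^ n ≠ 0 := by positivity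
        field_simp
        ring
      calc |u (n + 1) - u 0| ≤ |u (n + 1) - u n| + |u n - u 0| := by
            have := abs_sub_le (u (n+1)) (u n) (u 0)
            linarith
        _ ≤ C / (d : ℝ) ^ (n + 1) + C / ((d : ℝ) - 1) * (1 - (((d : ℝ) ^ n)⁻¹)) := by
            linarith
        _ = C / ((d : ℝ) - 1) * (1 - (((d : ℝ) ^ (n + 1))⁻¹)) := by linarith [hgeo]
  have hbound : ∀ n : ℕ, |u n - u 0| ≤ C / ((d : ℝ) - 1) := by
    intro n
    refine (hind n).trans ?_
    have h1 : (0:ℝ) ≤ C / ((d : ℝ) - 1) := div_nonneg hC (by linarith)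
    have h2 : (0:ℝ) ≤ (((d : ℝ) ^ n)⁻¹) := by positivity
    nlinarith
  have hlim : |g z - u 0| ≤ C / ((d : ℝ) - 1) := by
    have ht : Tendsto (fun n => |u n - u 0|) atTop (nhds (|g z - u 0|)) :=
      ((hg z).sub_const (u 0)).abs
    exact le_of_tendsto ht (Filter.Eventually.of_forall hbound)
  have hch := Stmt14Aux.chordal z
  rw [hu0] at hlim
  calc |(1 / 2 : ℝ) * Real.log (1 + ‖z‖ ^ 2) - g z|
      ≤ |(1 / 2 : ℝ) * Real.log (1 + ‖z‖ ^ 2) -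
          Real.log (max 1 (‖z‖))| + |Real.log (max 1 (‖z‖)) - g z| := by
        have := abs_sub_le ((1 / 2 : ℝ) * Real.log (1 + ‖z‖ ^ 2))
          (Real.log (max 1 (‖z‖))) (g z)
        linarith
    _ ≤ C / ((d : ℝ) - 1) + (1 / 2) * Real.log 2 := by
        rw [abs_sub_comm] at hlim
        linarith
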